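/- For α = 1/2 with both saturating forms, if 0 < q̄ < 1/√(η·ρ) then x̂₁ = q̄/(1 − ηρ·q̄²)·(√(w₂/w₁) + η·q̄) and x̂₂ = q̄/(1 − ηρ·q̄²)·(√(w₁/w₂) + ρ·q̄) satisfy the constraint (x₂/(1+η x₂))^(1/2)·(x₁/(1+ρ x₁))^(1/2) = q̄, the minimum cost is q̄/(1 − ηρ·q̄²)·(2√(w₁w₂) + (w₁η + w₂ρ)·q̄), and no output q̄ ≥ 1/√(ηρ) is achievable by any x₁, x₂ > 0. -/

import Mathlib

set_option maxHeartbeats 1000000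

lemma aux_min_doubly (w₁ w₂ η ρ q a b M : ℝ)
    (hw₁ : 0 < w₁) (hw₂ : 0 < w₂) (hη : 0 < η) (hρ : 0 < ρ) (hq : 0 < q)
    (hD : 0 < 1 - η * ρ * q ^ 2) (hM2 : M ^ 2 = w₁ * w₂) (hM0 : 0 ≤ M)
    (ha : 0 < a) (hb : 0 < b)
    (hclear : b * a = q ^ 2 * ((1 + η * b) * (1 + ρ * a))) :
    q / (1 - η * ρ * q ^ 2) * (2 * M + (w₁ * η + w₂ * ρ) * q) ≤ w₁ * a + w₂ * b := by
  obtain ⟨A, hA⟩ : ∃ A : ℝ, A = (1 - η * ρ * q ^ 2) * a - q ^ 2 * η := ⟨_, rfl⟩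
  obtain ⟨B, hB⟩ : ∃ B : ℝ, B = (1 - η * ρ * q ^ 2) * b - q ^ 2 * ρ := ⟨_, rfl⟩
  have hAB : A * B = q ^ 2 := by
    rw [hA, hB]; linear_combination (1 - η * ρ * q ^ 2) * hclear
  have hq20 : (0:ℝ) < q ^ 2 := by positivity
  have hAgt : -(q ^ 2 * η) < A := by rw [hA]; nlinarith [mul_pos hD ha]
  have hBgt : -(q ^ 2 * ρ) < B := by rw [hB]; nlinarith [mul_pos hD hb]
  have hApos : 0 < A := by
    by_contra hA'
    push_neg at hA'
    have hAne : A ≠ 0 := by intro h; rw [h, zero_mul] at hAB; nlinarith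
    have hAneg : A < 0 := lt_of_le_of_ne hA' hAne
    have hBneg : B < 0 := by nlinarith [hAB]
    have h5 : 0 < q ^ 2 * η + A := by linarith
    have h6 : 0 < q ^ 2 * ρ + B := by linarith
    have h7 : 0 < (q ^ 2 * η + A) * (-B) := mul_pos h5 (neg_pos.mpr hBneg)
    nlinarith [h7, hAB, mul_pos h6 (show (0:ℝ) < q ^ 2 * η by positivity),
      mul_pos hq20 hD]
  have hBpos : 0 < B := by nlinarith [hAB]
  have key : 2 * q * M ≤ w₁ * A + w₂ * B := by
    nlinarith [sq_nonneg (w₁ * A - q * M), mul_pos hw₁ hApos, hAB, hM2]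
  have expand : w₁ * a + w₂ * b
      = (w₁ * A + w₂ * B + q ^ 2 * (w₁ * η + w₂ * ρ)) / (1 - η * ρ * q ^ 2) := by
    rw [hA, hB]; field_simp; ring
  rw [expand, div_mul_eq_mul_div]
  gcongr
  nlinarith [key]

/-- with both saturating forms (η, ρ > 0), the given x̂₁, x̂₂ are
feasible and cost-minimizing for 0 < q̄ < 1/√(ηρ), with the stated minimum cost,
and no output q̄ ≥ 1/√(ηρ) is achievable. -/
theorem doubly_saturating_optimum (w₁ w₂ η ρ q : ℝ)
    (hw₁ : 0 < w₁) (hw₂ : 0 < w₂) (hη : 0 < η) (hρ : 0 < ρ)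
    (hq : 0 < q) (hq2 : q < 1 / Real.sqrt (η * ρ)) :
    let D : ℝ := 1 - η * ρ * q ^ 2
    let x₁ : ℝ := q / D * (Real.sqrt (w₂ / w₁) + η * q)
    let x₂ : ℝ := q / D * (Real.sqrt (w₁ / w₂) + ρ * q)
    let f : ℝ → ℝ → ℝ := fun a b =>
      Real.sqrt (b / (1 + η * b)) * Real.sqrt (a / (1 + ρ * a))
    f x₁ x₂ = q ∧
    (∀ a b : ℝ, 0 < a → 0 < b → f a b = q → w₁ * x₁ + w₂ * x₂ ≤ w₁ * a + w₂ * b) ∧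
    w₁ * x₁ + w₂ * x₂ = q / D * (2 * Real.sqrt (w₁ * w₂) + (w₁ * η + w₂ * ρ) * q) ∧
    (∀ q' ≥ 1 / Real.sqrt (η * ρ), ¬ ∃ a b : ℝ, 0 < a ∧ 0 < b ∧ f a b = q') := by
  intro D x₁ x₂ f
  have hηρ : 0 < η * ρ := mul_pos hη hρ
  have hsηρ : 0 < Real.sqrt (η * ρ) := Real.sqrt_pos.mpr hηρ
  have hq1 : q * Real.sqrt (η * ρ) < 1 := by
    have := (lt_div_iff₀ hsηρ).mp hq2; linarith
  have hsq : Real.sqrt (η * ρ) ^ 2 = η * ρ := Real.sq_sqrt hηρ.le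
  have hD : 0 < 1 - η * ρ * q ^ 2 := by nlinarith [mul_pos hq hsηρ, hq1, hsq]
  set s := Real.sqrt (w₂ / w₁) with hs
  set t := Real.sqrt (w₁ / w₂) with ht
  have hs0 : 0 < s := Real.sqrt_pos.mpr (by positivity)
  have ht0 : 0 < t := Real.sqrt_pos.mpr (by positivity)
  have hst : s * t = 1 := by
    rw [hs, ht, ← Real.sqrt_mul (by positivity)]
    rw [show w₂ / w₁ * (w₁ / w₂) = 1 by field_simp]
    exact Real.sqrt_one
  set M := Real.sqrt (w₁ * w₂) with hM
  have hM0 : 0 < M := Real.sqrt_pos.mpr (by positivity)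
  have hM2' : M ^ 2 = w₁ * w₂ := Real.sq_sqrt (by positivity)
  have hws : w₁ * s = M := by
    rw [hM, hs, show w₁ * w₂ = w₁ ^ 2 * (w₂ / w₁) by field_simp,
      Real.sqrt_mul (by positivity), Real.sqrt_sq hw₁.le]
  have hwt : w₂ * t = M := by
    rw [hM, ht, show w₁ * w₂ = w₂ ^ 2 * (w₁ / w₂) by field_simp,
      Real.sqrt_mul (by positivity), Real.sqrt_sq hw₂.le]
  have hDne : (1 - η * ρ * q ^ 2) ≠ 0 := ne_of_gt hD
  have hx₁ : x₁ = q / (1 - η * ρ * q ^ 2) * (s + η * q) := rfl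
  have hx₂ : x₂ = q / (1 - η * ρ * q ^ 2) * (t + ρ * q) := rfl
  have hx₁0 : 0 < x₁ := by rw [hx₁]; positivity
  have hx₂0 : 0 < x₂ := by rw [hx₂]; positivity
  have hd₁ : 0 < 1 + ρ * x₁ := by positivity
  have hd₂ : 0 < 1 + η * x₂ := by positivity
  have e1 : x₁ / (1 + ρ * x₁) = q * (s + η * q) / (1 + ρ * q * s) := by
    rw [hx₁]
    have h1 : 0 < 1 + ρ * q * s := by positivity
    rw [div_eq_div_iff (by positivity) h1.ne']
    field_simp
    linear_combination mul_inv_cancel₀ hDne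
  have e2 : x₂ / (1 + η * x₂) = q * (t + ρ * q) / (1 + η * q * t) := by
    rw [hx₂]
    have h1 : 0 < 1 + η * q * t := by positivity
    rw [div_eq_div_iff (by positivity) h1.ne']
    field_simp
    linear_combination mul_inv_cancel₀ hDne
  have eprod : x₂ / (1 + η * x₂) * (x₁ / (1 + ρ * x₁)) = q ^ 2 := by
    rw [e1, e2]
    have h1 : (0:ℝ) < 1 + ρ * q * s := by positivity
    have h2 : (0:ℝ) < 1 + η * q * t := by positivity
    field_simp
    linear_combination (1 - η * ρ * q ^ 2) * hst
  have feas : f x₁ x₂ = q := by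
    show Real.sqrt (x₂ / (1 + η * x₂)) * Real.sqrt (x₁ / (1 + ρ * x₁)) = q
    rw [← Real.sqrt_mul (by positivity), eprod, Real.sqrt_sq hq.le]
  have hcost : w₁ * x₁ + w₂ * x₂
      = q / (1 - η * ρ * q ^ 2) * (2 * M + (w₁ * η + w₂ * ρ) * q) := by
    rw [hx₁, hx₂]
    field_simp
    linear_combination (1 - η * ρ * q ^ 2)⁻¹ * hws + (1 - η * ρ * q ^ 2)⁻¹ * hwt
  refine ⟨feas, ?_, hcost, ?_⟩
  · intro a b ha hb hfab
    have hfab' : Real.sqrt (b / (1 + η * b)) * Real.sqrt (a / (1 + ρ * a)) = q := hfab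
    have hda : 0 < 1 + ρ * a := by positivity
    have hdb : 0 < 1 + η * b := by positivity
    have huv : b / (1 + η * b) * (a / (1 + ρ * a)) = q ^ 2 := by
      have h2 : Real.sqrt (b / (1 + η * b) * (a / (1 + ρ * a))) = q := by
        rw [Real.sqrt_mul (by positivity)]; exact hfab'
      have h3 := Real.sq_sqrt (show (0:ℝ) ≤ b / (1 + η * b) * (a / (1 + ρ * a)) by positivity)
      rw [h2] at h3; linarith
    have hclear : b * a = q ^ 2 * ((1 + η * b) * (1 + ρ * a)) := by
      field_simp at huv
      linarith [huv]
    rw [hcost]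
    exact aux_min_doubly w₁ w₂ η ρ q a b M hw₁ hw₂ hη hρ hq hD hM2' hM0.le ha hb hclear
  · intro q' hq' ⟨a, b, ha, hb, hfab⟩
    have hfab' : Real.sqrt (b / (1 + η * b)) * Real.sqrt (a / (1 + ρ * a)) = q' := hfab
    have h1 : b / (1 + η * b) * (a / (1 + ρ * a)) < 1 / (η * ρ) := by
      rw [div_mul_div_comm, div_lt_div_iff₀ (by positivity) hηρ]
      nlinarith [mul_pos hη hb, mul_pos hρ ha]
    have hlt : Real.sqrt (b / (1 + η * b)) * Real.sqrt (a / (1 + ρ * a))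
        < 1 / Real.sqrt (η * ρ) := by
      rw [← Real.sqrt_mul (by positivity), one_div, ← Real.sqrt_inv]
      exact Real.sqrt_lt_sqrt (by positivity) (by rw [← one_div]; exact h1)
    linarith
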